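/- Let φ0(x) = π^{-1/4}·exp(−x²/2) and φ1(x) = √2·π^{-1/4}·x·exp(−x²/2) be the first two normalized Hermite functions, let 0 ≤ p ≤ 1, and define ψ(x,y) = √p·φ0(x)·φ1(y) + √(1−p)·φ1(x)·φ0(y), the wavefunction of the photonic Bell state Ψ⁺ = √p|01⟩ + √(1−p)|10⟩. Then ∫∫_{ℝ²} sgn(x·y)·ψ(x,y)² dx dy = (4/π)·√(p(1−p)); that is, the bit quadrature correlation equals 4/π times the negativity N_B = √(p(1−p)). -/

import Mathlib

open MeasureTheory Real

lemma measurable_rsign : Measurable Real.sign := by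
  unfold Real.sign
  exact Measurable.ite measurableSet_Iio measurable_const
    (Measurable.ite measurableSet_Ioi measurable_const measurable_const)

lemma rsign_mul' (x y : ℝ) : Real.sign (x * y) = Real.sign x * Real.sign y := by
  rcases lt_trichotomy x 0 with hx | hx | hx <;> rcases lt_trichotomy y 0 with hy | hy | hy <;>
    simp [hx, hy, Real.sign_of_neg, Real.sign_of_pos, Real.sign_zero,
      mul_pos_of_neg_of_neg, mul_neg_of_neg_of_pos, mul_neg_of_pos_of_neg, mul_pos]

lemma int_pow_exp (n : ℕ) : Integrable (fun x : ℝ => x ^ n * Real.exp (-x ^ 2)) := by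
  have := integrable_rpow_mul_exp_neg_mul_sq (b := 1) one_pos (s := n)
    (lt_of_lt_of_le (by norm_num) (Nat.cast_nonneg n))
  simpa [Real.rpow_natCast] using this

lemma int_sign_pow_exp (n : ℕ) :
    Integrable (fun x : ℝ => Real.sign x * (x ^ n * Real.exp (-x ^ 2))) := by
  refine (int_pow_exp n).bdd_mul (c := 1) (measurable_rsign.aestronglyMeasurable) (Filter.Eventually.of_forall fun x => ?_)
  rcases lt_trichotomy x 0 with hx | hx | hx <;>
    simp [Real.sign_of_neg, Real.sign_of_pos, hx]

lemma odd_int_zero (f : ℝ → ℝ) (hf : ∀ x, f (-x) = -f x) : ∫ x : ℝ, f x = 0 := by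
  have h := MeasureTheory.integral_neg_eq_self f (volume : Measure ℝ)
  simp_rw [hf, integral_neg] at h
  linarith

lemma S_int_zero : ∫ x : ℝ, Real.sign x * (x ^ 0 * Real.exp (-x ^ 2)) = 0 := by
  refine odd_int_zero _ fun x => ?_
  simp [Real.sign_neg]

lemma T_int_zero : ∫ x : ℝ, Real.sign x * (x ^ 2 * Real.exp (-x ^ 2)) = 0 := by
  refine odd_int_zero _ fun x => ?_
  simp [Real.sign_neg]

lemma Ioi_int : ∫ x in Set.Ioi (0:ℝ), x * Real.exp (-x ^ 2) = 1 / 2 := by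
  have hd : ∀ x ∈ Set.Ici (0:ℝ),
      HasDerivAt (fun x : ℝ => -Real.exp (-x ^ 2) / 2) (x * Real.exp (-x ^ 2)) x := by
    intro x _
    have h1 : HasDerivAt (fun x : ℝ => -x ^ 2) (-(2 * x)) x := by
      exact ((hasDerivAt_pow 2 x).neg).congr_deriv (by norm_num)
    have h3 := (h1.exp.neg).div_const 2
    exact h3.congr_deriv (by ring)
  have hint : IntegrableOn (fun x : ℝ => x * Real.exp (-x ^ 2)) (Set.Ioi 0) := by
    have := integrable_mul_exp_neg_mul_sq (b := 1) one_pos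
    simpa using this.integrableOn
  have htend : Filter.Tendsto (fun x : ℝ => -Real.exp (-x ^ 2) / 2) Filter.atTop (nhds 0) := by
    have h1 : Filter.Tendsto (fun x : ℝ => -x ^ 2) Filter.atTop Filter.atBot :=
      Filter.tendsto_neg_atBot_iff.mpr (Filter.tendsto_pow_atTop two_ne_zero)
    have := (((Real.tendsto_exp_atBot).comp h1).neg).div_const 2
    simpa using this
  have := integral_Ioi_of_hasDerivAt_of_tendsto' hd hint htend
  rw [this]
  norm_num

lemma U_int_one : ∫ x : ℝ, Real.sign x * (x * Real.exp (-x ^ 2)) = 1 := by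
  have heq : (fun x : ℝ => Real.sign x * (x * Real.exp (-x ^ 2)))
      = fun x : ℝ => |x| * Real.exp (-|x| ^ 2) := by
    funext x
    rw [sq_abs]
    rcases lt_trichotomy x 0 with hx | hx | hx <;>
      simp [Real.sign_of_neg, Real.sign_of_pos, hx, abs_of_neg, abs_of_pos]
  rw [heq, integral_comp_abs (f := fun x => x * Real.exp (-x ^ 2)), Ioi_int]
  norm_num

lemma bell_pointwise (p : ℝ) (hp0 : 0 ≤ p) (hp1 : p ≤ 1) (x y : ℝ) :
    Real.sign (x * y) *
      (Real.sqrt p * (π ^ (-(1:ℝ)/4) * Real.exp (-x^2/2)) *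
        (Real.sqrt 2 * π ^ (-(1:ℝ)/4) * y * Real.exp (-y^2/2)) +
       Real.sqrt (1-p) * (Real.sqrt 2 * π ^ (-(1:ℝ)/4) * x * Real.exp (-x^2/2)) *
        (π ^ (-(1:ℝ)/4) * Real.exp (-y^2/2))) ^ 2
    = (2*p/π) * ((Real.sign x * (x^0 * Real.exp (-x^2))) * (Real.sign y * (y^2 * Real.exp (-y^2))))
      + (2*(1-p)/π) * ((Real.sign x * (x^2 * Real.exp (-x^2))) * (Real.sign y * (y^0 * Real.exp (-y^2))))
      + (4*Real.sqrt p*Real.sqrt (1-p)/π) *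
          ((Real.sign x * (x * Real.exp (-x^2))) * (Real.sign y * (y * Real.exp (-y^2)))) := by
  rw [rsign_mul']
  have ha : (π ^ (-(1:ℝ)/4)) ^ (4:ℕ) = π⁻¹ := by
    rw [← Real.rpow_natCast (π ^ (-(1:ℝ)/4)) 4, ← Real.rpow_mul pi_pos.le]
    norm_num [Real.rpow_neg_one]
  have hEx : Real.exp (-x^2/2) * Real.exp (-x^2/2) = Real.exp (-x^2) := by
    rw [← Real.exp_add]; ring_nf
  have hEy : Real.exp (-y^2/2) * Real.exp (-y^2/2) = Real.exp (-y^2) := by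
    rw [← Real.exp_add]; ring_nf
  have hsp : Real.sqrt p ^ 2 = p := Real.sq_sqrt hp0
  have hsq : Real.sqrt (1-p) ^ 2 = 1 - p := Real.sq_sqrt (by linarith)
  have hs2 : Real.sqrt 2 ^ 2 = 2 := Real.sq_sqrt (by norm_num)
  have hpi : (π : ℝ) ≠ 0 := pi_ne_zero
  have hQ : (Real.sqrt p * (π ^ (-(1:ℝ)/4) * Real.exp (-x^2/2)) *
        (Real.sqrt 2 * π ^ (-(1:ℝ)/4) * y * Real.exp (-y^2/2)) +
       Real.sqrt (1-p) * (Real.sqrt 2 * π ^ (-(1:ℝ)/4) * x * Real.exp (-x^2/2)) *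
        (π ^ (-(1:ℝ)/4) * Real.exp (-y^2/2))) ^ 2
      = 2 * π⁻¹ * ((p * y^2 + 2*(Real.sqrt p * Real.sqrt (1-p))*(x*y) + (1-p)*x^2)
          * (Real.exp (-x^2) * Real.exp (-y^2))) := by
    have e1 : (Real.sqrt p * (π ^ (-(1:ℝ)/4) * Real.exp (-x^2/2)) *
        (Real.sqrt 2 * π ^ (-(1:ℝ)/4) * y * Real.exp (-y^2/2)) +
       Real.sqrt (1-p) * (Real.sqrt 2 * π ^ (-(1:ℝ)/4) * x * Real.exp (-x^2/2)) *
        (π ^ (-(1:ℝ)/4) * Real.exp (-y^2/2))) ^ 2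
        = Real.sqrt 2 ^ 2 * (π ^ (-(1:ℝ)/4)) ^ (4:ℕ) *
          ((Real.exp (-x^2/2) * Real.exp (-x^2/2)) * ((Real.exp (-y^2/2) * Real.exp (-y^2/2)) *
           (Real.sqrt p ^ 2 * y^2 + 2*(Real.sqrt p * Real.sqrt (1-p))*(x*y)
            + Real.sqrt (1-p) ^ 2 * x^2))) := by
      ring
    rw [e1, hs2, ha, hEx, hEy, hsp, hsq]
    ring
  rw [hQ]
  field_simp
  ring

/-- **Bit quadrature correlations of the photonic Bell state
`Ψ⁺ = √p|01⟩ + √(1−p)|10⟩`.** With `φ0, φ1` the first two normalized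
Hermite functions and `ψ(x,y) = √p·φ0(x)φ1(y) + √(1−p)·φ1(x)φ0(y)`, the
sign-binned quadrature correlation of the position distribution `ψ²`
equals `(4/π)·√(p(1−p))`, i.e. `4/π` times the negativity. -/
theorem bell_state_psi_bit_correlation (p : ℝ) (hp0 : 0 ≤ p) (hp1 : p ≤ 1)
    (phi0 phi1 : ℝ → ℝ)
    (hphi0 : ∀ x : ℝ, phi0 x = π ^ (-(1 : ℝ) / 4) * Real.exp (-x ^ 2 / 2))
    (hphi1 : ∀ x : ℝ, phi1 x =
      Real.sqrt 2 * π ^ (-(1 : ℝ) / 4) * x * Real.exp (-x ^ 2 / 2))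
    (psi : ℝ → ℝ → ℝ)
    (hpsi : ∀ x y : ℝ, psi x y =
      Real.sqrt p * phi0 x * phi1 y + Real.sqrt (1 - p) * phi1 x * phi0 y) :
    ∫ q : ℝ × ℝ, Real.sign (q.1 * q.2) * (psi q.1 q.2) ^ 2
      = (4 / π) * Real.sqrt (p * (1 - p)) := by
  have hfun : (fun q : ℝ × ℝ => Real.sign (q.1 * q.2) * (psi q.1 q.2) ^ 2)
      = fun q : ℝ × ℝ =>
        (2*p/π) * ((Real.sign q.1 * (q.1^0 * Real.exp (-q.1^2)))
          * (Real.sign q.2 * (q.2^2 * Real.exp (-q.2^2))))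
        + (2*(1-p)/π) * ((Real.sign q.1 * (q.1^2 * Real.exp (-q.1^2)))
          * (Real.sign q.2 * (q.2^0 * Real.exp (-q.2^2))))
        + (4*Real.sqrt p*Real.sqrt (1-p)/π) *
            ((Real.sign q.1 * (q.1 * Real.exp (-q.1^2)))
          * (Real.sign q.2 * (q.2 * Real.exp (-q.2^2)))) := by
    funext q
    rw [hpsi, hphi0, hphi0, hphi1, hphi1]
    exact bell_pointwise p hp0 hp1 q.1 q.2
  rw [hfun]
  have iS := int_sign_pow_exp 0
  have iT := int_sign_pow_exp 2
  have iU : Integrable (fun x : ℝ => Real.sign x * (x * Real.exp (-x ^ 2))) := by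
    simpa using int_sign_pow_exp 1
  have i1 := (iS.mul_prod iT).const_mul (2*p/π)
  have i2 := (iT.mul_prod iS).const_mul (2*(1-p)/π)
  have i3 := (iU.mul_prod iU).const_mul (4*Real.sqrt p*Real.sqrt (1-p)/π)
  rw [MeasureTheory.Measure.volume_eq_prod]
  have i12 : Integrable (fun q : ℝ × ℝ =>
      (2*p/π) * ((Real.sign q.1 * (q.1^0 * Real.exp (-q.1^2)))
        * (Real.sign q.2 * (q.2^2 * Real.exp (-q.2^2))))
      + (2*(1-p)/π) * ((Real.sign q.1 * (q.1^2 * Real.exp (-q.1^2)))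
        * (Real.sign q.2 * (q.2^0 * Real.exp (-q.2^2)))))
      ((volume : Measure ℝ).prod volume) := i1.add i2
  rw [integral_add i12 i3, integral_add i1 i2,
    integral_const_mul, integral_const_mul, integral_const_mul,
    integral_prod_mul (f := fun x : ℝ => Real.sign x * (x^0 * Real.exp (-x^2)))
      (g := fun y : ℝ => Real.sign y * (y^2 * Real.exp (-y^2))),
    integral_prod_mul (f := fun x : ℝ => Real.sign x * (x^2 * Real.exp (-x^2)))
      (g := fun y : ℝ => Real.sign y * (y^0 * Real.exp (-y^2))),
    integral_prod_mul (f := fun x : ℝ => Real.sign x * (x * Real.exp (-x^2)))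
      (g := fun y : ℝ => Real.sign y * (y * Real.exp (-y^2))),
    S_int_zero, T_int_zero, U_int_one]
  rw [Real.sqrt_mul hp0]
  ring
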